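/- arXiv:2311.01874 — 2 statements merged into one kernel-verified Lean document; each statement's English description precedes it below -/
import Mathlib

section
/- Let E be a finite-dimensional vector space over a field, F_• an exhaustive increasing filtration of E indexed by ℤ (F_k = 0 for k ≪ 0, F_k = E for k ≫ 0) and G^• an exhaustive decreasing filtration (G^k = E for k ≪ 0, G^k = 0 for k ≫ 0). Then the following are equivalent: (i) for every k ∈ ℤ, E = F_k E ⊕ G^{k+1} E; (ii) E = ⊕_{k∈ℤ} (F_k E ∩ G^k E), and moreover F_j E = ⊕_{k ≤ j} (F_k E ∩ G^k E) and G^j E = ⊕_{k ≥ j} (F_k E ∩ G^k E) for all j. -/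
/-- If a family of submodules is independent, then the sup over a set `P` is disjoint
from the sup over the complement of `P`. -/
lemma aux_disjoint_biSup_biSup_compl {R M ι : Type*} [Ring R] [AddCommGroup M] [Module R M]
    [DecidableEq ι] {p : ι → Submodule R M} (h : iSupIndep p) (P : ι → Prop) [DecidablePred P] :
    Disjoint (⨆ i, ⨆ _ : P i, p i) (⨆ i, ⨆ _ : ¬ P i, p i) := by
  rw [Submodule.disjoint_def]
  intro x hx hx'
  obtain ⟨f, hf⟩ := (Submodule.mem_biSup_iff_exists_dfinsupp P p x).mp hx
  obtain ⟨g, hg⟩ := (Submodule.mem_biSup_iff_exists_dfinsupp (fun i => ¬ P i) p x).mp hx'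
  have hinj := h.dfinsupp_lsum_injective
  have heq : f.filter P = g.filter (fun i => ¬ P i) := hinj (hf.trans hg.symm)
  have hzero : f.filter P = 0 := by
    ext i
    by_cases hi : P i
    · rw [heq]
      simp [DFinsupp.filter_apply, hi]
    · simp [DFinsupp.filter_apply, hi]
  rw [← hf, hzero, map_zero]

/-- Opposite filtrations: for a finite-dimensional vector space `E` with an exhaustive
increasing filtration `F` and an exhaustive decreasing filtration `G`, the condition
`E = F_k ⊕ G^{k+1}` for all `k` is equivalent to `E` being the internal direct sum of
the subspaces `F_k ∩ G^k`, with `F_j = ⊕_{k ≤ j} (F_k ∩ G^k)` and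
`G^j = ⊕_{k ≥ j} (F_k ∩ G^k)` for all `j`. -/
theorem opposite_filtrations_iff (K : Type*) [Field K] (E : Type*) [AddCommGroup E]
    [Module K E] [FiniteDimensional K E]
    (F G : ℤ → Submodule K E) (hF : Monotone F) (hG : Antitone G)
    (hFbot : ∃ N : ℤ, ∀ k ≤ N, F k = ⊥) (hFtop : ∃ N : ℤ, ∀ k, N ≤ k → F k = ⊤)
    (hGtop : ∃ N : ℤ, ∀ k ≤ N, G k = ⊤) (hGbot : ∃ N : ℤ, ∀ k, N ≤ k → G k = ⊥) :
    (∀ k : ℤ, IsCompl (F k) (G (k + 1))) ↔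
      (DirectSum.IsInternal (fun k : ℤ => F k ⊓ G k) ∧
        (∀ j : ℤ, F j = ⨆ k ≤ j, F k ⊓ G k) ∧
        (∀ j : ℤ, G j = ⨆ k ≥ j, F k ⊓ G k)) := by
  set W : ℤ → Submodule K E := fun k => F k ⊓ G k with hWdef
  have hWle : ∀ (P : ℤ → Prop) (i : ℤ), P i → W i ≤ ⨆ k, ⨆ _ : P k, W k :=
    fun P i hi => le_iSup₂ (f := fun k (_ : P k) => W k) i hi
  constructor
  · intro h
    obtain ⟨Nfb, hNfb⟩ := hFbot
    obtain ⟨Nft, hNft⟩ := hFtop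
    obtain ⟨Ngb, hNgb⟩ := hGbot
    -- key step: F j = F (j-1) ⊔ W j
    have hstepF : ∀ j : ℤ, F j = F (j - 1) ⊔ W j := by
      intro j
      apply le_antisymm
      · intro x hx
        have hx' : x ∈ F (j - 1) ⊔ G (j - 1 + 1) := by
          rw [(h (j - 1)).sup_eq_top]; trivial
        obtain ⟨a, ha, b, hb, hab⟩ := Submodule.mem_sup.mp hx'
        have hj : j - 1 + 1 = j := by ring
        rw [hj] at hb
        have hbF : b ∈ F j := by
          have : b = x - a := by rw [← hab]; abel
          rw [this]
          exact (F j).sub_mem hx (hF (by omega) ha)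
        exact hab ▸ Submodule.add_mem_sup ha (Submodule.mem_inf.mpr ⟨hbF, hb⟩)
      · exact sup_le (hF (by omega)) inf_le_left
    -- key step: G j = W j ⊔ G (j+1)
    have hstepG : ∀ j : ℤ, G j = W j ⊔ G (j + 1) := by
      intro j
      apply le_antisymm
      · intro x hx
        have hx' : x ∈ F j ⊔ G (j + 1) := by
          rw [(h j).sup_eq_top]; trivial
        obtain ⟨a, ha, b, hb, hab⟩ := Submodule.mem_sup.mp hx'
        have haG : a ∈ G j := by
          have : a = x - b := by rw [← hab]; abel
          rw [this]
          exact (G j).sub_mem hx (hG (by omega) hb)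
        exact hab ▸ Submodule.add_mem_sup (Submodule.mem_inf.mpr ⟨ha, haG⟩) hb
      · exact sup_le inf_le_right (hG (by omega))
    -- F j = ⨆ k ≤ j, W k
    have hFj : ∀ j : ℤ, F j = ⨆ k ≤ j, W k := by
      have hbelow : ∀ j : ℤ, j ≤ Nfb → F j = ⨆ k ≤ j, W k := by
        intro j hj
        rw [hNfb j hj, eq_comm, eq_bot_iff]
        refine iSup₂_le fun k hk => ?_
        have hk0 : F k = ⊥ := hNfb k (by omega)
        exact le_trans inf_le_left hk0.le
      have hstep : ∀ j : ℤ, Nfb ≤ j → F j = ⨆ k ≤ j, W k → F (j + 1) = ⨆ k ≤ j + 1, W k := by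
        intro j _ ih
        rw [show F (j + 1) = F (j + 1 - 1) ⊔ W (j + 1) from hstepF (j + 1),
          show j + 1 - 1 = j by ring, ih]
        apply le_antisymm
        · exact sup_le (iSup₂_le fun k hk => hWle _ k (by omega)) (hWle _ (j + 1) le_rfl)
        · refine iSup₂_le fun k hk => ?_
          rcases eq_or_lt_of_le hk with rfl | hlt
          · exact le_sup_right
          · exact le_trans (hWle _ k (by omega)) le_sup_left
      intro j
      rcases le_or_gt j Nfb with hj | hj
      · exact hbelow j hj
      · exact Int.le_induction (hbelow Nfb le_rfl) hstep j (by omega)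
    -- G j = ⨆ k ≥ j, W k
    have hGj : ∀ j : ℤ, G j = ⨆ k ≥ j, W k := by
      have habove : ∀ j : ℤ, Ngb ≤ j → G j = ⨆ k ≥ j, W k := by
        intro j hj
        rw [hNgb j hj, eq_comm, eq_bot_iff]
        refine iSup₂_le fun k hk => ?_
        have hk0 : G k = ⊥ := hNgb k (by omega)
        exact le_trans inf_le_right hk0.le
      have hstep : ∀ j : ℤ, j ≤ Ngb → G j = ⨆ k ≥ j, W k → G (j - 1) = ⨆ k ≥ j - 1, W k := by
        intro j _ ih
        rw [show G (j - 1) = W (j - 1) ⊔ G (j - 1 + 1) from hstepG (j - 1),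
          show j - 1 + 1 = j by ring, ih]
        apply le_antisymm
        · exact sup_le (hWle _ (j - 1) le_rfl) (iSup₂_le fun k hk => hWle _ k (by omega))
        · refine iSup₂_le fun k hk => ?_
          rcases eq_or_lt_of_le hk with rfl | hlt
          · exact le_sup_left
          · exact le_trans (hWle _ k (by omega)) le_sup_right
      intro j
      rcases le_or_gt Ngb j with hj | hj
      · exact habove j hj
      · exact Int.le_induction_down (habove Ngb le_rfl) hstep j (by omega)
    refine ⟨?_, hFj, hGj⟩
    have hsup : ⨆ k, W k = ⊤ := by
      apply eq_top_iff.mpr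
      rw [← hNft Nft le_rfl, hFj Nft]
      exact iSup₂_le fun k _ => le_iSup W k
    have hindep : iSupIndep W := by
      intro j
      have hle : (⨆ k, ⨆ _ : k ≠ j, W k) ≤ F (j - 1) ⊔ G (j + 1) := by
        refine iSup₂_le fun k hk => ?_
        rcases lt_or_gt_of_ne hk with hlt | hgt
        · exact le_trans (le_trans inf_le_left (hF (by omega))) le_sup_left
        · exact le_trans (le_trans inf_le_right (hG (by omega))) le_sup_right
      refine Disjoint.mono_right hle ?_
      rw [Submodule.disjoint_def]
      intro x hx hx'
      obtain ⟨a, ha, b, hb, hab⟩ := Submodule.mem_sup.mp hx'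
      obtain ⟨hxF, hxG⟩ := Submodule.mem_inf.mp hx
      have haG : a ∈ G j := by
        have : a = x - b := by rw [← hab]; abel
        rw [this]
        exact (G j).sub_mem hxG (hG (by omega) hb)
      have ha0 : a = 0 := by
        have hd := (h (j - 1)).disjoint
        rw [show j - 1 + 1 = j by ring] at hd
        exact (Submodule.disjoint_def.mp hd) a ha haG
      have hxb : x = b := by rw [← hab, ha0, zero_add]
      exact (Submodule.disjoint_def.mp (h j).disjoint) x hxF (hxb ▸ hb)
    exact DirectSum.isInternal_submodule_of_iSupIndep_of_iSup_eq_top hindep hsup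
  · rintro ⟨hint, hFj, hGj⟩ k
    have hGrw : G (k + 1) = ⨆ i, ⨆ _ : ¬ (i ≤ k), W i := by
      rw [hGj (k + 1)]
      exact iSup_congr fun i => iSup_congr_Prop (by omega) (fun _ => rfl)
    constructor
    · rw [hFj k, hGrw]
      exact aux_disjoint_biSup_biSup_compl hint.submodule_iSupIndep (fun i => i ≤ k)
    · rw [codisjoint_iff, eq_top_iff, ← hint.submodule_iSup_eq_top]
      refine iSup_le fun i => ?_
      rcases le_or_gt i k with hi | hi
      · exact le_trans (le_trans inf_le_left (hF hi)) le_sup_left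
      · exact le_trans (le_trans inf_le_right (hG (show k + 1 ≤ i by omega))) le_sup_right
end

section
/- Let f ∈ ℂ[t] be a nonconstant polynomial. If a rational function φ ∈ ℂ(t) satisfies φ′ = f′ · φ, then φ = 0. -/
open Polynomial

lemma deriv_algebraMap (D : Derivation ℂ (RatFunc ℂ) (RatFunc ℂ)) (hD : D RatFunc.X = 1)
    (p : Polynomial ℂ) :
    D (algebraMap (Polynomial ℂ) (RatFunc ℂ) p)
      = algebraMap (Polynomial ℂ) (RatFunc ℂ) (derivative p) := by
  have key : D.compAlgebraMap (Polynomial ℂ) = Polynomial.mkDerivation ℂ (1 : RatFunc ℂ) := by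
    apply Polynomial.derivation_ext
    simp [Derivation.compAlgebraMap_apply, RatFunc.algebraMap_X, hD,
      Polynomial.mkDerivation_X]
  have h := Derivation.congr_fun key p
  simpa [Derivation.compAlgebraMap_apply, Polynomial.mkDerivation_apply,
    Algebra.smul_def, mul_one] using h

/-- Let `f ∈ ℂ[t]` be a nonconstant polynomial, and let `D` be the derivative on the
field `ℂ(t)` of rational functions (the unique `ℂ`-linear derivation with `D t = 1`).
If a rational function `φ` satisfies `φ' = f' · φ`, then `φ = 0`. -/
theorem rational_solution_of_twisted_equation_is_zero
    (f : Polynomial ℂ) (hf : f.natDegree ≠ 0)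
    (D : Derivation ℂ (RatFunc ℂ) (RatFunc ℂ)) (hD : D RatFunc.X = 1)
    (φ : RatFunc ℂ)
    (hφ : D φ = algebraMap (Polynomial ℂ) (RatFunc ℂ) (Polynomial.derivative f) * φ) :
    φ = 0 := by
  by_contra hne
  set a := algebraMap (Polynomial ℂ) (RatFunc ℂ) with ha
  set n := φ.num with hn
  set d := φ.denom with hd
  have hd0 : d ≠ 0 := φ.denom_ne_zero
  have hn0 : n ≠ 0 := by simpa [hn, RatFunc.num_ne_zero] using hne
  have had : a d ≠ 0 := RatFunc.algebraMap_ne_zero hd0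
  have hmul : φ * a d = a n :=
    ((div_eq_iff had).mp (RatFunc.num_div_denom φ)).symm
  -- differentiate the relation φ * d = n
  have hder : a (derivative f) * φ * a d + φ * a (derivative d) = a (derivative n) := by
    have := congrArg D hmul
    rw [D.leibniz, deriv_algebraMap D hD, deriv_algebraMap D hD, hφ] at this
    rw [← this]
    ring_nf
    rfl
  -- clear denominators
  have hratfunc : a (derivative f * n * d + n * derivative d) = a (derivative n * d) := by
    have := congrArg (· * a d) hder
    simp only [add_mul] at this
    rw [map_add, map_mul, map_mul, map_mul, map_mul]
    calc a (derivative f) * a n * a d + a n * a (derivative d)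
        = a (derivative f) * (φ * a d) * a d + (φ * a d) * a (derivative d) := by rw [hmul]
      _ = (a (derivative f) * φ * a d) * a d + (φ * a (derivative d)) * a d := by ring
      _ = a (derivative n) * a d := by rw [← add_mul, hder]
  have hpoly : derivative f * n * d + n * derivative d = derivative n * d :=
    RatFunc.algebraMap_injective ℂ hratfunc
  -- degree contradiction
  have hf' : derivative f ≠ 0 := fun h => hf (natDegree_eq_zero_of_derivative_eq_zero h)
  have hdegf : (0 : WithBot ℕ) ≤ (derivative f).degree := zero_le_degree_iff.mpr hf'
  have hnd : (n * d).degree ≤ (derivative f * n * d).degree := by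
    rw [degree_mul, degree_mul, degree_mul]
    calc n.degree + d.degree = 0 + (n.degree + d.degree) := by rw [zero_add]
      _ ≤ (derivative f).degree + (n.degree + d.degree) := by
          exact add_le_add_left hdegf _
      _ = (derivative f).degree + n.degree + d.degree := by rw [add_assoc]
  have hlt1 : (n * derivative d).degree < (derivative f * n * d).degree := by
    refine lt_of_lt_of_le ?_ hnd
    rw [degree_mul, degree_mul]
    exact WithBot.add_lt_add_left (degree_ne_bot.mpr hn0) (degree_derivative_lt hd0)
  have hlt2 : (derivative n * d).degree < (derivative f * n * d).degree := by
    refine lt_of_lt_of_le ?_ hnd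
    rw [degree_mul, degree_mul]
    exact WithBot.add_lt_add_right (degree_ne_bot.mpr hd0) (degree_derivative_lt hn0)
  have heq : (derivative f * n * d + n * derivative d).degree
      = (derivative f * n * d).degree := degree_add_eq_left_of_degree_lt hlt1
  rw [hpoly] at heq
  exact absurd heq (ne_of_lt hlt2)
end
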